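/- Let ℓ > 5 be a prime and let n ≥ 2 be an integer. If H is a subgroup of the n-fold direct product SL₂(ℤ/ℓℤ)ⁿ such that for every pair of indices 1 ≤ i < j ≤ n the image of H under the projection onto the i-th and j-th factors is all of SL₂(ℤ/ℓℤ) × SL₂(ℤ/ℓℤ), then H = SL₂(ℤ/ℓℤ)ⁿ. -/

import Mathlib

open Matrix
open scoped commutatorElement

namespace RibetAux

variable {F : Type*} [Field F]

def U (c : F) : Matrix.SpecialLinearGroup (Fin 2) F :=
  ⟨!![1, c; 0, 1], by simp [Matrix.det_fin_two_of]⟩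

def L (c : F) : Matrix.SpecialLinearGroup (Fin 2) F :=
  ⟨!![1, 0; c, 1], by simp [Matrix.det_fin_two_of]⟩

theorem U_mul (a b : F) : U a * U b = U (a + b) := by
  ext i j
  simp only [Matrix.SpecialLinearGroup.coe_mul]
  fin_cases i <;> fin_cases j <;>
    simp [U, Matrix.SpecialLinearGroup.coe_mul, Matrix.mul_apply, Fin.sum_univ_two] <;> ring

theorem L_mul (a b : F) : L a * L b = L (a + b) := by
  ext i j
  simp only [Matrix.SpecialLinearGroup.coe_mul]
  fin_cases i <;> fin_cases j <;>
    simp [L, Matrix.SpecialLinearGroup.coe_mul, Matrix.mul_apply, Fin.sum_univ_two] <;> ring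

theorem U_zero : (U 0 : Matrix.SpecialLinearGroup (Fin 2) F) = 1 := by
  ext i j; fin_cases i <;> fin_cases j <;> simp [U]

theorem L_zero : (L 0 : Matrix.SpecialLinearGroup (Fin 2) F) = 1 := by
  ext i j; fin_cases i <;> fin_cases j <;> simp [L]

theorem U_inv (a : F) : (U a)⁻¹ = U (-a) :=
  inv_eq_of_mul_eq_one_right (by rw [U_mul, add_neg_cancel, U_zero])

theorem L_inv (a : F) : (L a)⁻¹ = L (-a) :=
  inv_eq_of_mul_eq_one_right (by rw [L_mul, add_neg_cancel, L_zero])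

/-- the diagonal matrix diag(2, 2⁻¹) -/
def D2 (h2 : (2 : F) ≠ 0) : Matrix.SpecialLinearGroup (Fin 2) F :=
  ⟨!![2, 0; 0, (2 : F)⁻¹], by simp [Matrix.det_fin_two_of, mul_inv_cancel₀ h2]⟩

theorem D2_U_comm (h2 : (2 : F) ≠ 0) (s : F) : D2 h2 * U s = U (4 * s) * D2 h2 := by
  ext i j
  simp only [Matrix.SpecialLinearGroup.coe_mul]
  fin_cases i <;> fin_cases j <;>
    simp [U, D2, Matrix.SpecialLinearGroup.coe_mul, Matrix.mul_apply, Fin.sum_univ_two] <;>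
    field_simp <;> ring

theorem D2_L_comm (h2 : (2 : F) ≠ 0) (s : F) : D2 h2 * L s = L (s / 4) * D2 h2 := by
  have h4 : (4 : F) ≠ 0 := by
    have := mul_ne_zero h2 h2
    rwa [show (2 : F) * 2 = 4 by norm_num] at this
  ext i j
  simp only [Matrix.SpecialLinearGroup.coe_mul]
  fin_cases i <;> fin_cases j <;>
    simp [L, D2, Matrix.SpecialLinearGroup.coe_mul, Matrix.mul_apply, Fin.sum_univ_two] <;>
    field_simp <;> ring

theorem U_mem_commutator (h2 : (2 : F) ≠ 0) (h3 : (3 : F) ≠ 0) (c : F) :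
    U c ∈ commutator (Matrix.SpecialLinearGroup (Fin 2) F) := by
  have key : ⁅D2 h2, U (c / 3)⁆ = U c := by
    rw [commutatorElement_def, D2_U_comm, U_inv, mul_inv_cancel_right, U_mul]
    congr 1
    field_simp
    ring
  rw [commutator_def, ← key]
  exact Subgroup.commutator_mem_commutator (Subgroup.mem_top _) (Subgroup.mem_top _)

theorem L_mem_commutator (h2 : (2 : F) ≠ 0) (h3 : (3 : F) ≠ 0) (c : F) :
    L c ∈ commutator (Matrix.SpecialLinearGroup (Fin 2) F) := by
  have h4 : (4 : F) ≠ 0 := by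
    have := mul_ne_zero h2 h2
    rwa [show (2 : F) * 2 = 4 by norm_num] at this
  have key : ⁅D2 h2, L (-4 * c / 3)⁆ = L c := by
    rw [commutatorElement_def, D2_L_comm, L_inv, mul_inv_cancel_right, L_mul]
    congr 1
    field_simp
    ring
  rw [commutator_def, ← key]
  exact Subgroup.commutator_mem_commutator (Subgroup.mem_top _) (Subgroup.mem_top _)

/-- diag(a, a⁻¹) as an element of SL₂ -/
def Dg (a : F) (ha : a ≠ 0) : Matrix.SpecialLinearGroup (Fin 2) F :=
  ⟨!![a, 0; 0, a⁻¹], by simp [Matrix.det_fin_two_of, mul_inv_cancel₀ ha]⟩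

theorem Dg_eq (a : F) (ha : a ≠ 0) :
    Dg a ha = U a * L (-a⁻¹) * U a * (U (-1) * L 1 * U (-1)) := by
  ext i j
  simp only [Matrix.SpecialLinearGroup.coe_mul]
  fin_cases i <;> fin_cases j <;>
    simp [U, L, Dg, Matrix.SpecialLinearGroup.coe_mul, Matrix.mul_apply, Fin.sum_univ_two] <;>
    field_simp <;> simp

theorem Dg_mem_commutator (h2 : (2 : F) ≠ 0) (h3 : (3 : F) ≠ 0) (a : F) (ha : a ≠ 0) :
    Dg a ha ∈ commutator (Matrix.SpecialLinearGroup (Fin 2) F) := by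
  rw [Dg_eq]
  have hU := U_mem_commutator h2 h3
  have hL := L_mem_commutator h2 h3
  exact Subgroup.mul_mem _ (Subgroup.mul_mem _ (Subgroup.mul_mem _ (hU a) (hL _)) (hU a))
    (Subgroup.mul_mem _ (Subgroup.mul_mem _ (hU _) (hL _)) (hU _))

theorem diag_mul_inv (d : Fin 2 → F) (hd : ∀ i, d i ≠ 0) :
    diagonal d * diagonal (fun i => (d i)⁻¹) = (1 : Matrix (Fin 2) (Fin 2) F) := by
  rw [diagonal_mul_diagonal,
    show (fun i => d i * (d i)⁻¹) = fun _ : Fin 2 => (1 : F) from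
      funext fun i => mul_inv_cancel₀ (hd i), diagonal_one]

theorem diag_inv_mul (d : Fin 2 → F) (hd : ∀ i, d i ≠ 0) :
    diagonal (fun i => (d i)⁻¹) * diagonal d = (1 : Matrix (Fin 2) (Fin 2) F) := by
  rw [diagonal_mul_diagonal,
    show (fun i => (d i)⁻¹ * d i) = fun _ : Fin 2 => (1 : F) from
      funext fun i => inv_mul_cancel₀ (hd i), diagonal_one]

/-- conjugation by an invertible diagonal matrix, as a monoid hom of SL₂ -/
def conjHom (d : Fin 2 → F) (hd : ∀ i, d i ≠ 0) :
    Matrix.SpecialLinearGroup (Fin 2) F →* Matrix.SpecialLinearGroup (Fin 2) F where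
  toFun S := ⟨diagonal d * S.val * diagonal (fun i => (d i)⁻¹), by
    have h1 : det (diagonal d) * det (diagonal (fun i => (d i)⁻¹)) = 1 := by
      rw [← det_mul, diag_mul_inv d hd, det_one]
    rw [det_mul, det_mul, S.2, mul_one]
    exact h1⟩
  map_one' := Subtype.ext (by
    simp only [Matrix.SpecialLinearGroup.coe_one, mul_one]
    exact diag_mul_inv d hd)
  map_mul' A B := Subtype.ext (by
    simp only [Matrix.SpecialLinearGroup.coe_mul]
    calc diagonal d * (A.val * B.val) * diagonal (fun i => (d i)⁻¹)
        = diagonal d * A.val * ((diagonal (fun i => (d i)⁻¹) * diagonal d) * B.val) *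
          diagonal (fun i => (d i)⁻¹) := by rw [diag_inv_mul d hd]; noncomm_ring
      _ = _ := by
        show _ = (diagonal d * A.val * diagonal (fun i => (d i)⁻¹)) *
          (diagonal d * B.val * diagonal (fun i => (d i)⁻¹))
        simp only [Matrix.mul_assoc])

theorem coe_conjHom (d : Fin 2 → F) (hd : ∀ i, d i ≠ 0)
    (S : Matrix.SpecialLinearGroup (Fin 2) F) :
    (conjHom d hd S).val = diagonal d * S.val * diagonal (fun i => (d i)⁻¹) := rfl

theorem conjHom_mem_commutator (d : Fin 2 → F) (hd : ∀ i, d i ≠ 0)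
    {S : Matrix.SpecialLinearGroup (Fin 2) F}
    (hS : S ∈ commutator (Matrix.SpecialLinearGroup (Fin 2) F)) :
    conjHom d hd S ∈ commutator (Matrix.SpecialLinearGroup (Fin 2) F) := by
  rw [commutator_def] at hS ⊢
  have h1 : Subgroup.map (conjHom d hd)
      ⁅(⊤ : Subgroup (Matrix.SpecialLinearGroup (Fin 2) F)), ⊤⁆ ≤
      ⁅(⊤ : Subgroup (Matrix.SpecialLinearGroup (Fin 2) F)), ⊤⁆ := by
    rw [Subgroup.map_commutator]
    exact Subgroup.commutator_mono le_top le_top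
  exact h1 (Subgroup.mem_map_of_mem _ hS)

theorem transvection_fin_two_cases (t : TransvectionStruct (Fin 2) F) :
    t.toMatrix = (U t.c).val ∨ t.toMatrix = (L t.c).val := by
  rcases t with ⟨i, j, hij, c⟩
  fin_cases i <;> fin_cases j
  · exact absurd rfl hij
  · left
    ext a b
    fin_cases a <;> fin_cases b <;>
      simp [Matrix.TransvectionStruct.toMatrix, Matrix.transvection, Matrix.single, U]
  · right
    ext a b
    fin_cases a <;> fin_cases b <;>
      simp [Matrix.TransvectionStruct.toMatrix, Matrix.transvection, Matrix.single, L]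
  · exact absurd rfl hij

theorem SL2_perfect (h2 : (2 : F) ≠ 0) (h3 : (3 : F) ≠ 0)
    (S : Matrix.SpecialLinearGroup (Fin 2) F) :
    S ∈ commutator (Matrix.SpecialLinearGroup (Fin 2) F) := by
  have hP : ∀ M : Matrix (Fin 2) (Fin 2) F, det M ≠ 0 →
      ∃ (T : Matrix.SpecialLinearGroup (Fin 2) F) (d : Fin 2 → F),
        (∀ i, d i ≠ 0) ∧ T ∈ commutator (Matrix.SpecialLinearGroup (Fin 2) F) ∧
          M = T.val * diagonal d := by
    intro M hM
    refine diagonal_transvection_induction_of_det_ne_zero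
      (fun M => ∃ (T : Matrix.SpecialLinearGroup (Fin 2) F) (d : Fin 2 → F),
        (∀ i, d i ≠ 0) ∧ T ∈ commutator (Matrix.SpecialLinearGroup (Fin 2) F) ∧
          M = T.val * diagonal d) M hM ?_ ?_ ?_
    · intro D hD
      refine ⟨1, D, ?_, Subgroup.one_mem _, by simp⟩
      intro i h
      rw [det_diagonal] at hD
      exact hD (Finset.prod_eq_zero (Finset.mem_univ i) h)
    · intro t
      rcases transvection_fin_two_cases t with h | h
      · exact ⟨U t.c, fun _ => 1, fun i => one_ne_zero, U_mem_commutator h2 h3 _, by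
          rw [h, diagonal_one, mul_one]⟩
      · exact ⟨L t.c, fun _ => 1, fun i => one_ne_zero, L_mem_commutator h2 h3 _, by
          rw [h, diagonal_one, mul_one]⟩
    · rintro A B hA hB ⟨T, d, hd, hT, rfl⟩ ⟨S', e, he, hS', rfl⟩
      refine ⟨T * conjHom d hd S', fun i => d i * e i,
        fun i => mul_ne_zero (hd i) (he i), Subgroup.mul_mem _ hT
          (conjHom_mem_commutator d hd hS'), ?_⟩
      rw [Matrix.SpecialLinearGroup.coe_mul, coe_conjHom, ← diagonal_mul_diagonal]
      calc T.val * diagonal d * (S'.val * diagonal e)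
          = T.val * (diagonal d * S'.val *
              ((diagonal (fun i => (d i)⁻¹) * diagonal d) * diagonal e)) := by
            rw [diag_inv_mul d hd]; noncomm_ring
        _ = _ := by noncomm_ring
  obtain ⟨T, d, hd, hT, heq⟩ := hP S.val (by rw [S.2]; exact one_ne_zero)
  have hdet : d 0 * d 1 = 1 := by
    have h := S.2
    rw [heq, det_mul, T.2, one_mul, det_diagonal, Fin.prod_univ_two] at h
    exact h
  have hd1 : d 1 = (d 0)⁻¹ := eq_inv_of_mul_eq_one_left (by rw [mul_comm]; exact hdet)
  have hDg : diagonal d = (Dg (d 0) (hd 0)).val := by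
    ext i j
    fin_cases i <;> fin_cases j <;> simp [Dg, Matrix.diagonal, hd1]
  have hS : S = T * Dg (d 0) (hd 0) := by
    apply Subtype.ext
    rw [Matrix.SpecialLinearGroup.coe_mul]
    show S.val = T.val * (Dg (d 0) (hd 0)).val
    rw [← hDg, ← heq]
  rw [hS]
  exact Subgroup.mul_mem _ hT (Dg_mem_commutator h2 h3 _ _)

section Main

variable {G : Type*} [Group G] {n : ℕ}

/-- The set of values `g` such that some `h ∈ H` has `h j = g` and `h m = 1` for `m ∈ s`. -/
def Ks (H : Subgroup (Fin n → G)) (j : Fin n) (s : Finset (Fin n)) : Subgroup G where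
  carrier := {g | ∃ h ∈ H, h j = g ∧ ∀ m ∈ s, h m = 1}
  one_mem' := ⟨1, H.one_mem, rfl, fun m _ => rfl⟩
  mul_mem' := by
    rintro a b ⟨h, hh, rfl, hs⟩ ⟨k, hk, rfl, ks⟩
    exact ⟨h * k, H.mul_mem hh hk, rfl, fun m hm => by
      simp [Pi.mul_apply, hs m hm, ks m hm]⟩
  inv_mem' := by
    rintro a ⟨h, hh, rfl, hs⟩
    exact ⟨h⁻¹, H.inv_mem hh, rfl, fun m hm => by simp [Pi.inv_apply, hs m hm]⟩

theorem Ks_eq_top (hperf : ∀ g : G, g ∈ commutator G)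
    (H : Subgroup (Fin n → G)) (j : Fin n)
    (hpair : ∀ i j : Fin n, i ≠ j → ∀ a b : G, ∃ h ∈ H, h i = a ∧ h j = b)
    (hex : ∃ i : Fin n, i ≠ j) :
    ∀ s : Finset (Fin n), j ∉ s → Ks H j s = ⊤ := by
  intro s
  induction s using Finset.induction_on with
  | empty =>
    intro _
    rw [Subgroup.eq_top_iff']
    intro g
    obtain ⟨i, hij⟩ := hex
    obtain ⟨h, hH, _, hj⟩ := hpair i j hij 1 g
    exact ⟨h, hH, hj, fun m hm => absurd hm (Finset.notMem_empty m)⟩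
  | @insert i s hi ih =>
    intro hjs
    rw [Finset.mem_insert, not_or] at hjs
    obtain ⟨hji, hjs'⟩ := hjs
    have hK := ih hjs'
    have hle : ⁅(⊤ : Subgroup G), ⊤⁆ ≤ Ks H j (insert i s) := by
      rw [Subgroup.commutator_le]
      intro b _ c _
      have hb : b ∈ Ks H j s := by rw [hK]; trivial
      obtain ⟨h, hH, hhj, hhs⟩ := hb
      obtain ⟨k, kH, ki, kj⟩ := hpair i j (fun h' => hji h'.symm) 1 c
      refine ⟨⁅h, k⁆, ?_, ?_, ?_⟩
      · rw [commutatorElement_def]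
        exact H.mul_mem (H.mul_mem (H.mul_mem hH kH) (H.inv_mem hH)) (H.inv_mem kH)
      · simp [commutatorElement_def, Pi.mul_apply, Pi.inv_apply, hhj, kj]
      · intro m hm
        rcases Finset.mem_insert.mp hm with rfl | hm'
        · simp [commutatorElement_def, Pi.mul_apply, Pi.inv_apply, ki]
        · simp [commutatorElement_def, Pi.mul_apply, Pi.inv_apply, hhs m hm']
    rw [Subgroup.eq_top_iff']
    intro g
    have hg := hperf g
    rw [commutator_def] at hg
    exact hle hg

end Main

end RibetAux

/-- Ribet's lemma: a subgroup of `SL₂(ℤ/ℓℤ)ⁿ` (with `ℓ > 5` prime, `n ≥ 2`)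
surjecting onto every pair of factors is the whole group. -/
theorem stmt3 (ℓ n : ℕ) (hℓ : ℓ.Prime) (hℓ5 : 5 < ℓ) (hn : 2 ≤ n)
    (H : Subgroup (Fin n → Matrix.SpecialLinearGroup (Fin 2) (ZMod ℓ)))
    (hpairs : ∀ i j : Fin n, i < j →
      H.map ((Pi.evalMonoidHom (fun _ => Matrix.SpecialLinearGroup (Fin 2) (ZMod ℓ)) i).prod
        (Pi.evalMonoidHom (fun _ => Matrix.SpecialLinearGroup (Fin 2) (ZMod ℓ)) j)) = ⊤) :
    H = ⊤ := by
  haveI : Fact ℓ.Prime := ⟨hℓ⟩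
  haveI : NeZero ℓ := ⟨hℓ.pos.ne'⟩
  set G := Matrix.SpecialLinearGroup (Fin 2) (ZMod ℓ) with hG
  have h2 : (2 : ZMod ℓ) ≠ 0 := by
    have h : ((2 : ℕ) : ZMod ℓ) ≠ 0 := by
      rw [Ne, ZMod.natCast_eq_zero_iff]
      intro hdvd
      have := Nat.le_of_dvd (by norm_num) hdvd
      omega
    simpa using h
  have h3 : (3 : ZMod ℓ) ≠ 0 := by
    have h : ((3 : ℕ) : ZMod ℓ) ≠ 0 := by
      rw [Ne, ZMod.natCast_eq_zero_iff]
      intro hdvd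
      have := Nat.le_of_dvd (by norm_num) hdvd
      omega
    simpa using h
  have hperf : ∀ g : G, g ∈ commutator G := RibetAux.SL2_perfect h2 h3
  -- pairwise surjectivity, in pointwise form
  have hpair : ∀ i j : Fin n, i ≠ j → ∀ a b : G, ∃ h ∈ H, h i = a ∧ h j = b := by
    intro i j hij a b
    rcases lt_or_gt_of_ne hij with hlt | hgt
    · have hmem : (a, b) ∈ H.map ((Pi.evalMonoidHom (fun _ => G) i).prod
          (Pi.evalMonoidHom (fun _ => G) j)) := by rw [hpairs i j hlt]; trivial
      obtain ⟨x, hx, hfx⟩ := hmem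
      rw [MonoidHom.prod_apply, Prod.mk.injEq] at hfx
      exact ⟨x, hx, hfx.1, hfx.2⟩
    · have hmem : (b, a) ∈ H.map ((Pi.evalMonoidHom (fun _ => G) j).prod
          (Pi.evalMonoidHom (fun _ => G) i)) := by rw [hpairs j i hgt]; trivial
      obtain ⟨x, hx, hfx⟩ := hmem
      rw [MonoidHom.prod_apply, Prod.mk.injEq] at hfx
      exact ⟨x, hx, hfx.2, hfx.1⟩
  -- every "one-coordinate" element lies in H
  have hsingle : ∀ (j : Fin n) (g : G), Pi.mulSingle j g ∈ H := by
    intro j g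
    have hex : ∃ i : Fin n, i ≠ j := by
      by_cases hj : j = ⟨0, by omega⟩
      · exact ⟨⟨1, by omega⟩, by rw [hj]; exact Fin.ne_of_val_ne (by norm_num)⟩
      · exact ⟨⟨0, by omega⟩, fun h => hj h.symm⟩
    have hKs := RibetAux.Ks_eq_top hperf H j hpair hex (Finset.univ.erase j)
      (Finset.notMem_erase j _)
    have hg : g ∈ RibetAux.Ks H j (Finset.univ.erase j) := by rw [hKs]; trivial
    obtain ⟨h, hH, hj, hs⟩ := hg
    have : h = Pi.mulSingle j g := by
      funext m
      by_cases hm : m = j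
      · subst hm; rw [Pi.mulSingle_eq_same]; exact hj
      · rw [Pi.mulSingle_eq_of_ne hm]
        exact hs m (Finset.mem_erase.mpr ⟨hm, Finset.mem_univ m⟩)
    rw [← this]
    exact hH
  rw [eq_top_iff]
  intro f _
  rw [← Finset.noncommProd_mulSingle f]
  exact Subgroup.noncommProd_mem H _ fun j _ => hsingle j (f j)
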